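/- Let g : (0,1] → [0,∞] with ∫₀¹ g(s)² ds < ∞ satisfy g(s)² ≥ 1/√(g(t)^{-4} + c(t−s)) for all 0 < s ≤ t ≤ 1 and some c > 0. If (tₙ) is a sequence in (0,1] with g(tₙ)² ≥ n for every n ≥ 1, then the upper box-counting dimension of the set {tₙ : n ≥ 1} is at most 1/2. -/
import Mathlib


open MeasureTheory

noncomputable def coverN (X : Set ℝ) (ε : ℝ) : ℕ :=
  sInf {n : ℕ | ∃ F : Finset ℝ, F.card = n ∧ X ⊆ ⋃ x ∈ F, Metric.ball x ε}

noncomputable def ubDim (X : Set ℝ) : ℝ :=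
  Filter.limsup (fun ε : ℝ => Real.log (coverN X ε) / (-Real.log ε))
    (nhdsWithin 0 (Set.Ioi 0))

private lemma cover_bound (c : ℝ) (hc : 0 < c) (g : ℝ → ENNReal)
    (hint : (∫⁻ s in Set.Ioc (0:ℝ) 1, (g s) ^ 2) < ⊤)
    (hlow : ∀ s t : ℝ, 0 < s → s ≤ t → t ≤ 1 →
      (g s) ^ 2 ≥ (((g t)⁻¹) ^ 4 + ENNReal.ofReal (c * (t - s))) ^ (-(1:ℝ)/2))
    (t : ℕ → ℝ) (ht : ∀ n : ℕ, 1 ≤ n → t n ∈ Set.Ioc (0:ℝ) 1)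
    (hbig : ∀ n : ℕ, 1 ≤ n → (g (t n)) ^ 2 ≥ (n : ENNReal))
    (ε : ℝ) (hε0 : 0 < ε) (hε1 : ε < 1) :
    (coverN {x : ℝ | ∃ n : ℕ, 1 ≤ n ∧ x = t n} ε : ℝ) ≤
      (2 * ((∫⁻ s in Set.Ioc (0:ℝ) 1, (g s) ^ 2).toReal * Real.sqrt (1 + 2*c)) + 3)
        / Real.sqrt ε := by
  classical
  set X := {x : ℝ | ∃ n : ℕ, 1 ≤ n ∧ x = t n} with hXdef
  set I := ∫⁻ s in Set.Ioc (0:ℝ) 1, (g s) ^ 2 with hIdef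
  have hsq : 0 < Real.sqrt ε := Real.sqrt_pos.mpr hε0
  have hsq1 : Real.sqrt ε ≤ 1 := Real.sqrt_le_one.mpr hε1.le
  set N := ⌈(Real.sqrt ε)⁻¹⌉₊ with hNdef
  have hN1 : 1 ≤ N := Nat.one_le_iff_ne_zero.mpr (by
    have : 0 < N := Nat.ceil_pos.mpr (by positivity)
    omega)
  have hc2 : (0:ℝ) < 1 + 2*c := by linarith
  have hsqc : 0 < Real.sqrt (1 + 2*c) := Real.sqrt_pos.mpr hc2
  -- key integral lower bound over an interval to the left of a late blow-up time
  have key : ∀ (lo : ℝ) (n : ℕ), N < n → 0 ≤ lo → lo < t n → t n - lo ≤ 2*ε →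
      ENNReal.ofReal ((t n - lo) * (Real.sqrt (1+2*c) * Real.sqrt ε)⁻¹)
        ≤ ∫⁻ s in Set.Ioc lo (t n), g s ^ 2 := by
    intro lo n hn hlo hlt hlen
    have hn1 : 1 ≤ n := le_trans hN1 hn.le
    have hx := ht n hn1
    have hg1 : ENNReal.ofReal ((Real.sqrt ε)⁻¹) ≤ (g (t n))^2 := by
      refine le_trans ?_ (hbig n hn1)
      refine ENNReal.ofReal_le_natCast.mpr ?_
      exact le_trans (Nat.le_ceil _) (Nat.cast_le.mpr hn.le)
    have hgx : ((g (t n))⁻¹)^4 ≤ ENNReal.ofReal ε := by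
      have h2 : ((g (t n))^2)⁻¹ ≤ ENNReal.ofReal (Real.sqrt ε) := by
        have h3 := ENNReal.inv_le_inv' hg1
        rwa [ENNReal.ofReal_inv_of_pos hsq, inv_inv] at h3
      calc ((g (t n))⁻¹)^4 = (((g (t n))^2)⁻¹)^2 := by
            rw [← ENNReal.inv_pow, ← ENNReal.inv_pow, ← pow_mul]
        _ ≤ (ENNReal.ofReal (Real.sqrt ε))^2 := pow_le_pow_left' h2 2
        _ = ENNReal.ofReal ε := by
            rw [← ENNReal.ofReal_pow (Real.sqrt_nonneg _), Real.sq_sqrt hε0.le]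
    have hconst : ∀ s ∈ Set.Ioc lo (t n),
        ENNReal.ofReal ((Real.sqrt (1+2*c) * Real.sqrt ε)⁻¹) ≤ g s ^ 2 := by
      intro s hs
      have hs0 : 0 < s := lt_of_le_of_lt hlo hs.1
      have hle := hlow s (t n) hs0 hs.2 hx.2
      refine le_trans ?_ hle
      have hbase : ((g (t n))⁻¹)^4 + ENNReal.ofReal (c * (t n - s))
          ≤ ENNReal.ofReal ((1+2*c)*ε) := by
        have h1 : c * (t n - s) ≤ 2*c*ε := by nlinarith [hs.1, hs.2]
        calc ((g (t n))⁻¹)^4 + ENNReal.ofReal (c * (t n - s))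
            ≤ ENNReal.ofReal ε + ENNReal.ofReal (2*c*ε) :=
              add_le_add hgx (ENNReal.ofReal_le_ofReal h1)
          _ = ENNReal.ofReal ((1+2*c)*ε) := by
              rw [← ENNReal.ofReal_add hε0.le (by positivity)]
              ring_nf
      have hmono : ENNReal.ofReal ((1+2*c)*ε) ^ (-(1:ℝ)/2)
          ≤ (((g (t n))⁻¹)^4 + ENNReal.ofReal (c * (t n - s))) ^ (-(1:ℝ)/2) := by
        rw [show (-(1:ℝ)/2) = -(1/2) by ring, ENNReal.rpow_neg, ENNReal.rpow_neg]
        exact ENNReal.inv_le_inv' (ENNReal.rpow_le_rpow hbase (by norm_num))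
      refine le_trans (le_of_eq ?_) hmono
      rw [ENNReal.ofReal_rpow_of_pos (by positivity)]
      congr 1
      rw [show (-(1:ℝ)/2) = -(1/2) by ring, Real.rpow_neg (by positivity),
        ← Real.sqrt_eq_rpow, Real.sqrt_mul hc2.le]
    calc ENNReal.ofReal ((t n - lo) * (Real.sqrt (1+2*c) * Real.sqrt ε)⁻¹)
        = ENNReal.ofReal ((Real.sqrt (1+2*c) * Real.sqrt ε)⁻¹) * ENNReal.ofReal (t n - lo) := by
          rw [← ENNReal.ofReal_mul (by positivity), mul_comm]
      _ = ∫⁻ _ in Set.Ioc lo (t n),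
            ENNReal.ofReal ((Real.sqrt (1+2*c) * Real.sqrt ε)⁻¹) := by
          rw [setLIntegral_const, Real.volume_Ioc]
      _ ≤ ∫⁻ s in Set.Ioc lo (t n), g s ^ 2 :=
          setLIntegral_mono' measurableSet_Ioc hconst
  -- the bad index set
  set K := (Finset.range (⌊ε⁻¹⌋₊ + 1)).filter
      (fun k : ℕ => 0 < k ∧ ∃ n : ℕ, N < n ∧ t n ∈ Set.Ioc ((k:ℝ)*ε) (((k:ℝ)+1)*ε)) with hKdef
  -- bound on a "spread-out" subfamily
  have hBbound : ∀ B : Finset ℕ,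
      (∀ k ∈ B, 0 < k ∧ ∃ n : ℕ, N < n ∧ t n ∈ Set.Ioc ((k:ℝ)*ε) (((k:ℝ)+1)*ε)) →
      (∀ k ∈ B, ∀ k' ∈ B, k < k' → k + 2 ≤ k') →
      (B.card : ℝ) * (Real.sqrt ε / Real.sqrt (1+2*c)) ≤ I.toReal := by
    intro B hB hgap
    have hch : ∀ k ∈ B, ∃ n : ℕ, N < n ∧ t n ∈ Set.Ioc ((k:ℝ)*ε) (((k:ℝ)+1)*ε) :=
      fun k hk => (hB k hk).2
    choose! nn hnn1 hnn2 using hch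
    set J : ℕ → Set ℝ := fun k => Set.Ioc ((k:ℝ)*ε - ε) (t (nn k)) with hJ
    have hk1R : ∀ k ∈ B, (1:ℝ) ≤ (k:ℝ) := by
      intro k hk; exact_mod_cast (hB k hk).1
    have hJsub : ∀ k ∈ B, J k ⊆ Set.Ioc (0:ℝ) 1 := by
      intro k hk s hs
      have hk1 := hk1R k hk
      have hx := ht (nn k) (le_trans hN1 (hnn1 k hk).le)
      have h0 : (0:ℝ) ≤ (k:ℝ)*ε - ε := by nlinarith
      exact ⟨lt_of_le_of_lt h0 hs.1, le_trans hs.2 hx.2⟩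
    have hlowJ : ∀ k ∈ B, ENNReal.ofReal (Real.sqrt ε / Real.sqrt (1+2*c))
        ≤ ∫⁻ s in J k, g s ^ 2 := by
      intro k hk
      have hk1 := hk1R k hk
      have hmem := hnn2 k hk
      have h0 : 0 ≤ (k:ℝ)*ε - ε := by nlinarith
      have h1 : (k:ℝ)*ε - ε < t (nn k) := by nlinarith [hmem.1]
      have h2 : t (nn k) - ((k:ℝ)*ε - ε) ≤ 2*ε := by nlinarith [hmem.2]
      refine le_trans ?_ (key _ _ (hnn1 k hk) h0 h1 h2)
      apply ENNReal.ofReal_le_ofReal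
      have hεlen : ε ≤ t (nn k) - ((k:ℝ)*ε - ε) := by nlinarith [hmem.1]
      have hdiv : ε * (Real.sqrt ε)⁻¹ = Real.sqrt ε := by
        rw [← div_eq_mul_inv]; exact Real.div_sqrt
      calc Real.sqrt ε / Real.sqrt (1+2*c)
          = ε * (Real.sqrt (1+2*c) * Real.sqrt ε)⁻¹ := by
            rw [mul_inv, div_eq_mul_inv, mul_comm ((Real.sqrt (1+2*c))⁻¹) ((Real.sqrt ε)⁻¹),
              ← mul_assoc, hdiv]
        _ ≤ (t (nn k) - ((k:ℝ)*ε - ε)) * (Real.sqrt (1+2*c) * Real.sqrt ε)⁻¹ :=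
            mul_le_mul_of_nonneg_right hεlen (by positivity)
    have hdd : ∀ k ∈ B, ∀ k' ∈ B, k + 2 ≤ k' → Disjoint (J k) (J k') := by
      intro k hk k' hk' hg2
      have hg2R : ((k:ℝ)+2) ≤ (k':ℝ) := by exact_mod_cast hg2
      apply Set.disjoint_left.mpr
      intro s hs hs'
      have hub : s ≤ ((k:ℝ)+1)*ε := le_trans hs.2 (hnn2 k hk).2
      have hlb : (k':ℝ)*ε - ε < s := hs'.1
      nlinarith
    have hdisj : (B : Set ℕ).PairwiseDisjoint J := by
      intro k hk k' hk' hne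
      have hk2 := Finset.mem_coe.mp hk
      have hk2' := Finset.mem_coe.mp hk'
      rcases lt_or_gt_of_ne hne with hlt | hlt
      · exact hdd k hk2 k' hk2' (hgap k hk2 k' hk2' hlt)
      · exact (hdd k' hk2' k hk2 (hgap k' hk2' k hk2 hlt)).symm
    have hsum : (B.card : ENNReal) * ENNReal.ofReal (Real.sqrt ε / Real.sqrt (1+2*c)) ≤ I := by
      calc (B.card : ENNReal) * ENNReal.ofReal (Real.sqrt ε / Real.sqrt (1+2*c))
          = ∑ _k ∈ B, ENNReal.ofReal (Real.sqrt ε / Real.sqrt (1+2*c)) := by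
            rw [Finset.sum_const, nsmul_eq_mul]
        _ ≤ ∑ k ∈ B, ∫⁻ s in J k, g s ^ 2 := Finset.sum_le_sum hlowJ
        _ = ∫⁻ s in ⋃ k ∈ B, J k, g s ^ 2 :=
            (lintegral_biUnion_finset hdisj (fun k _ => measurableSet_Ioc) _).symm
        _ ≤ I := lintegral_mono_set (Set.iUnion₂_subset hJsub)
    have hto := ENNReal.toReal_mono hint.ne hsum
    rwa [ENNReal.toReal_mul, ENNReal.toReal_natCast,
      ENNReal.toReal_ofReal (by positivity)] at hto
  -- card K bound via parity classes
  have hb0 : (0:ℝ) < Real.sqrt ε / Real.sqrt (1+2*c) := by positivity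
  have hKprop : ∀ k ∈ K, 0 < k ∧ ∃ n : ℕ, N < n ∧ t n ∈ Set.Ioc ((k:ℝ)*ε) (((k:ℝ)+1)*ε) := by
    intro k hk
    exact (Finset.mem_filter.mp hk).2
  have hK2 : (K.card : ℝ) ≤ 2 * (I.toReal * Real.sqrt (1+2*c)) / Real.sqrt ε := by
    have hsplit := Finset.card_filter_add_card_filter_not
      (s := K) (p := fun k => k % 2 = 0)
    set K0 := K.filter (fun k => k % 2 = 0) with hK0
    set K1 := K.filter (fun k => ¬ k % 2 = 0) with hK1
    have h0 : (K0.card : ℝ) * (Real.sqrt ε / Real.sqrt (1+2*c)) ≤ I.toReal := by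
      refine hBbound K0 (fun k hk => hKprop k (Finset.mem_filter.mp hk).1) ?_
      intro k hk k' hk' hlt
      have e1 := (Finset.mem_filter.mp hk).2
      have e2 := (Finset.mem_filter.mp hk').2
      omega
    have h1 : (K1.card : ℝ) * (Real.sqrt ε / Real.sqrt (1+2*c)) ≤ I.toReal := by
      refine hBbound K1 (fun k hk => hKprop k (Finset.mem_filter.mp hk).1) ?_
      intro k hk k' hk' hlt
      have e1 := (Finset.mem_filter.mp hk).2
      have e2 := (Finset.mem_filter.mp hk').2
      omega
    have hc0 : (K0.card : ℝ) ≤ I.toReal * Real.sqrt (1+2*c) / Real.sqrt ε := by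
      rw [← div_div_eq_mul_div]
      rw [div_div_eq_mul_div, ← div_div_eq_mul_div]
      exact (le_div_iff₀ hb0).mpr h0
    have hc1 : (K1.card : ℝ) ≤ I.toReal * Real.sqrt (1+2*c) / Real.sqrt ε := by
      rw [← div_div_eq_mul_div]
      rw [div_div_eq_mul_div, ← div_div_eq_mul_div]
      exact (le_div_iff₀ hb0).mpr h1
    have hcards : (K.card : ℝ) = (K0.card : ℝ) + (K1.card : ℝ) := by
      exact_mod_cast hsplit.symm
    rw [hcards]
    have : 2 * (I.toReal * Real.sqrt (1+2*c)) / Real.sqrt ε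
        = I.toReal * Real.sqrt (1+2*c) / Real.sqrt ε
          + I.toReal * Real.sqrt (1+2*c) / Real.sqrt ε := by ring
    rw [this]
    exact add_le_add hc0 hc1
  -- the covering
  have hcovN : (coverN X ε : ℝ) ≤ (N:ℝ) + 1 + K.card := by
    set F : Finset ℝ := ((Finset.Icc 1 N).image t)
        ∪ ((insert 0 K).image (fun k : ℕ => (k:ℝ)*ε + ε/2)) with hF
    have hcover : X ⊆ ⋃ x ∈ F, Metric.ball x ε := by
      rintro x ⟨n, hn1, rfl⟩
      by_cases hn : n ≤ N
      · refine Set.mem_iUnion₂.mpr ⟨t n, ?_, ?_⟩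
        · exact Finset.mem_union_left _
            (Finset.mem_image_of_mem t (Finset.mem_Icc.mpr ⟨hn1, hn⟩))
        · simpa [Metric.mem_ball] using hε0
      · push_neg at hn
        have hx := ht n hn1
        have hceil : 0 < ⌈t n / ε⌉₊ := Nat.ceil_pos.mpr (div_pos hx.1 hε0)
        set k : ℕ := ⌈t n / ε⌉₊ - 1 with hk
        have hk1 : k + 1 = ⌈t n / ε⌉₊ := by omega
        have hyle : t n ≤ ((k:ℝ)+1)*ε := by
          have h := Nat.le_ceil (t n / ε)
          rw [← hk1] at h
          push_cast at h
          calc t n = (t n / ε) * ε := by field_simp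
            _ ≤ ((k:ℝ)+1)*ε := mul_le_mul_of_nonneg_right h hε0.le
        have hygt : (k:ℝ)*ε < t n := by
          have h : k < ⌈t n / ε⌉₊ := by omega
          have h2 : (k:ℝ) < t n / ε := Nat.lt_ceil.mp h
          calc (k:ℝ)*ε < (t n / ε) * ε := mul_lt_mul_of_pos_right h2 hε0
            _ = t n := by field_simp
        have hkmem : k ∈ insert 0 K := by
          rcases Nat.eq_zero_or_pos k with h0 | hpos
          · rw [h0]; exact Finset.mem_insert_self _ _
          · refine Finset.mem_insert_of_mem ?_
            rw [hKdef]
            refine Finset.mem_filter.mpr ⟨?_, hpos, n, hn, hygt, hyle⟩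
            rw [Finset.mem_range, Nat.lt_succ_iff]
            refine Nat.le_floor ?_
            have hkε : (k:ℝ)*ε < 1 := lt_of_lt_of_le hygt hx.2
            rw [le_inv_comm₀ (by exact_mod_cast hpos) hε0]
            calc ε = 1 * ε := (one_mul ε).symm
              _ ≤ (k:ℝ)⁻¹ * 1 := by
                  rw [inv_mul_eq_div, le_div_iff₀ (by exact_mod_cast hpos)]
                  linarith [hkε]
              _ = (k:ℝ)⁻¹ := mul_one _
        refine Set.mem_iUnion₂.mpr ⟨(k:ℝ)*ε + ε/2, Finset.mem_union_right _
          (Finset.mem_image_of_mem _ hkmem), ?_⟩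
        rw [Metric.mem_ball, Real.dist_eq, abs_lt]
        constructor <;> nlinarith
    have hle : coverN X ε ≤ F.card := Nat.sInf_le ⟨F, rfl, hcover⟩
    have hcard : F.card ≤ N + (K.card + 1) := by
      refine le_trans (Finset.card_union_le _ _) (add_le_add ?_ ?_)
      · refine le_trans (Finset.card_image_le) ?_
        simp [Nat.card_Icc]
      · exact le_trans (Finset.card_image_le) (Finset.card_insert_le _ _)
    have : (coverN X ε : ℝ) ≤ (N:ℝ) + ((K.card:ℝ) + 1) := by
      exact_mod_cast le_trans hle hcard
    linarith
  -- assemble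
  have hNle : (N:ℝ) ≤ (Real.sqrt ε)⁻¹ + 1 := (Nat.ceil_lt_add_one (by positivity)).le
  have hone : 1 ≤ (Real.sqrt ε)⁻¹ := by
    rw [le_inv_comm₀ one_pos hsq]
    simpa using hsq1
  have hA0 : 0 ≤ I.toReal * Real.sqrt (1+2*c) := by positivity
  calc (coverN X ε : ℝ) ≤ (N:ℝ) + 1 + K.card := hcovN
    _ ≤ ((Real.sqrt ε)⁻¹ + 1) + 1 + 2 * (I.toReal * Real.sqrt (1+2*c)) / Real.sqrt ε := by
        linarith [hK2]
    _ ≤ (2 * (I.toReal * Real.sqrt (1+2*c)) + 3) / Real.sqrt ε := by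
        rw [div_eq_mul_inv, div_eq_mul_inv]
        nlinarith [hone, hA0, inv_pos.mpr hsq]

theorem blowup_times_dim_le_half (c : ℝ) (hc : 0 < c) (g : ℝ → ENNReal)
    (hint : (∫⁻ s in Set.Ioc (0:ℝ) 1, (g s) ^ 2) < ⊤)
    (hlow : ∀ s t : ℝ, 0 < s → s ≤ t → t ≤ 1 →
      (g s) ^ 2 ≥ (((g t)⁻¹) ^ 4 + ENNReal.ofReal (c * (t - s))) ^ (-(1:ℝ)/2))
    (t : ℕ → ℝ) (ht : ∀ n : ℕ, 1 ≤ n → t n ∈ Set.Ioc (0:ℝ) 1)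
    (hbig : ∀ n : ℕ, 1 ≤ n → (g (t n)) ^ 2 ≥ (n : ENNReal)) :
    ubDim {x : ℝ | ∃ n : ℕ, 1 ≤ n ∧ x = t n} ≤ 1 / 2 := by
  set X := {x : ℝ | ∃ n : ℕ, 1 ≤ n ∧ x = t n} with hXdef
  set C : ℝ := 2 * ((∫⁻ s in Set.Ioc (0:ℝ) 1, (g s) ^ 2).toReal * Real.sqrt (1 + 2*c)) + 3
    with hCdef
  have hC3 : 3 ≤ C := by
    have : 0 ≤ (∫⁻ s in Set.Ioc (0:ℝ) 1, (g s) ^ 2).toReal * Real.sqrt (1 + 2*c) := by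
      positivity
    linarith
  have hmem : Set.Ioo (0:ℝ) 1 ∈ nhdsWithin 0 (Set.Ioi 0) :=
    Ioo_mem_nhdsGT_of_mem ⟨le_refl 0, one_pos⟩
  set h : ℝ → ℝ := fun ε => Real.log C / (-Real.log ε) + 1/2 with hhdef
  have hfh : ∀ᶠ ε in nhdsWithin 0 (Set.Ioi 0),
      Real.log (coverN X ε) / (-Real.log ε) ≤ h ε := by
    filter_upwards [hmem] with ε hε
    obtain ⟨hε0, hε1⟩ := hε
    have hlogε : Real.log ε < 0 := Real.log_neg hε0 hε1
    have hpos : 0 < -Real.log ε := by linarith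
    have hsq : 0 < Real.sqrt ε := Real.sqrt_pos.mpr hε0
    have hcb := cover_bound c hc g hint hlow t ht hbig ε hε0 hε1
    have hrhs : Real.log (C / Real.sqrt ε) = Real.log C + 1/2 * (-Real.log ε) := by
      rw [Real.log_div (by linarith) hsq.ne', Real.log_sqrt hε0.le]
      ring
    have hbound : Real.log (coverN X ε) ≤ Real.log C + 1/2 * (-Real.log ε) := by
      rcases Nat.eq_zero_or_pos (coverN X ε) with h0 | hp
      · rw [h0]
        simp only [Nat.cast_zero, Real.log_zero]
        have : 0 ≤ Real.log C := Real.log_nonneg (by linarith)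
        nlinarith
      · rw [← hrhs]
        refine Real.log_le_log ?_ hcb
        exact_mod_cast hp
    calc Real.log (coverN X ε) / (-Real.log ε)
        ≤ (Real.log C + 1/2 * (-Real.log ε)) / (-Real.log ε) := by gcongr
      _ = Real.log C / (-Real.log ε) + 1/2 := by
          rw [add_div, mul_div_assoc, div_self hpos.ne', mul_one]
  have hneg : Filter.Tendsto (fun ε : ℝ => -Real.log ε) (nhdsWithin 0 (Set.Ioi 0))
      Filter.atTop :=
    Filter.tendsto_neg_atBot_atTop.comp Real.tendsto_log_nhdsGT_zero
  have hhalf : Filter.Tendsto h (nhdsWithin 0 (Set.Ioi 0)) (nhds (0 + 1/2)) :=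
    (tendsto_const_nhds.div_atTop hneg).add tendsto_const_nhds
  have hlims : Filter.limsup h (nhdsWithin 0 (Set.Ioi 0)) = 1/2 := by
    simpa using hhalf.limsup_eq
  have hcob : Filter.IsCoboundedUnder (· ≤ ·)
      (nhdsWithin 0 (Set.Ioi 0)) (fun ε : ℝ => Real.log (coverN X ε) / (-Real.log ε)) := by
    refine Filter.isCoboundedUnder_le_of_eventually_le _ (x := 0) ?_
    filter_upwards [hmem] with ε hε
    have hlogε : Real.log ε < 0 := Real.log_neg hε.1 hε.2
    have hnn : (0:ℝ) ≤ -Real.log ε := by linarith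
    exact div_nonneg (Real.log_natCast_nonneg _) hnn
  calc ubDim X ≤ Filter.limsup h (nhdsWithin 0 (Set.Ioi 0)) :=
      Filter.limsup_le_limsup hfh hcob hhalf.isBoundedUnder_le
    _ = 1/2 := hlims
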